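/- The plane curve defined over F₂ by x⁶ + x⁵y + xy⁵ + y⁶ + (x⁵ + x²y³ + y⁵)z + x³yz² + xy²z³ + (x + y)z⁵ + z⁶ = 0 has exactly 24 F₈-rational points that are smooth points of the curve. -/

import Mathlib

open MvPolynomial

/-- The degree-6 plane curve over `F₂` from the paper (genus 3 over `F₈`). -/
noncomputable def curveDeg6F8 : MvPolynomial (Fin 3) (GaloisField 2 3) :=
  X 0 ^ 6 + X 0 ^ 5 * X 1 + X 0 * X 1 ^ 5 + X 1 ^ 6 +
    (X 0 ^ 5 + X 0 ^ 2 * X 1 ^ 3 + X 1 ^ 5) * X 2 +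
    X 0 ^ 3 * X 1 * X 2 ^ 2 + X 0 * X 1 ^ 2 * X 2 ^ 3 +
    (X 0 + X 1) * X 2 ^ 5 + X 2 ^ 6

inductive F8 : Type | e0 | e1 | e2 | e3 | e4 | e5 | e6 | e7
deriving DecidableEq

instance : Fintype F8 :=
  ⟨⟨↑[F8.e0, F8.e1, F8.e2, F8.e3, F8.e4, F8.e5, F8.e6, F8.e7], by decide⟩,
    fun x => by cases x <;> decide⟩

namespace F8

def add : F8 → F8 → F8
  | e0, e0 => e0
  | e0, e1 => e1
  | e0, e2 => e2
  | e0, e3 => e3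
  | e0, e4 => e4
  | e0, e5 => e5
  | e0, e6 => e6
  | e0, e7 => e7
  | e1, e0 => e1
  | e1, e1 => e0
  | e1, e2 => e3
  | e1, e3 => e2
  | e1, e4 => e5
  | e1, e5 => e4
  | e1, e6 => e7
  | e1, e7 => e6
  | e2, e0 => e2
  | e2, e1 => e3
  | e2, e2 => e0
  | e2, e3 => e1
  | e2, e4 => e6
  | e2, e5 => e7
  | e2, e6 => e4
  | e2, e7 => e5
  | e3, e0 => e3
  | e3, e1 => e2
  | e3, e2 => e1
  | e3, e3 => e0
  | e3, e4 => e7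
  | e3, e5 => e6
  | e3, e6 => e5
  | e3, e7 => e4
  | e4, e0 => e4
  | e4, e1 => e5
  | e4, e2 => e6
  | e4, e3 => e7
  | e4, e4 => e0
  | e4, e5 => e1
  | e4, e6 => e2
  | e4, e7 => e3
  | e5, e0 => e5
  | e5, e1 => e4
  | e5, e2 => e7
  | e5, e3 => e6
  | e5, e4 => e1
  | e5, e5 => e0
  | e5, e6 => e3
  | e5, e7 => e2
  | e6, e0 => e6
  | e6, e1 => e7
  | e6, e2 => e4
  | e6, e3 => e5
  | e6, e4 => e2
  | e6, e5 => e3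
  | e6, e6 => e0
  | e6, e7 => e1
  | e7, e0 => e7
  | e7, e1 => e6
  | e7, e2 => e5
  | e7, e3 => e4
  | e7, e4 => e3
  | e7, e5 => e2
  | e7, e6 => e1
  | e7, e7 => e0

def mul : F8 → F8 → F8
  | e0, e0 => e0
  | e0, e1 => e0
  | e0, e2 => e0
  | e0, e3 => e0
  | e0, e4 => e0
  | e0, e5 => e0
  | e0, e6 => e0
  | e0, e7 => e0
  | e1, e0 => e0
  | e1, e1 => e1
  | e1, e2 => e2
  | e1, e3 => e3
  | e1, e4 => e4
  | e1, e5 => e5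
  | e1, e6 => e6
  | e1, e7 => e7
  | e2, e0 => e0
  | e2, e1 => e2
  | e2, e2 => e4
  | e2, e3 => e6
  | e2, e4 => e3
  | e2, e5 => e1
  | e2, e6 => e7
  | e2, e7 => e5
  | e3, e0 => e0
  | e3, e1 => e3
  | e3, e2 => e6
  | e3, e3 => e5
  | e3, e4 => e7
  | e3, e5 => e4
  | e3, e6 => e1
  | e3, e7 => e2
  | e4, e0 => e0
  | e4, e1 => e4
  | e4, e2 => e3
  | e4, e3 => e7
  | e4, e4 => e6
  | e4, e5 => e2
  | e4, e6 => e5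
  | e4, e7 => e1
  | e5, e0 => e0
  | e5, e1 => e5
  | e5, e2 => e1
  | e5, e3 => e4
  | e5, e4 => e2
  | e5, e5 => e7
  | e5, e6 => e3
  | e5, e7 => e6
  | e6, e0 => e0
  | e6, e1 => e6
  | e6, e2 => e7
  | e6, e3 => e1
  | e6, e4 => e5
  | e6, e5 => e3
  | e6, e6 => e2
  | e6, e7 => e4
  | e7, e0 => e0
  | e7, e1 => e7
  | e7, e2 => e5
  | e7, e3 => e2
  | e7, e4 => e1
  | e7, e5 => e6
  | e7, e6 => e4
  | e7, e7 => e3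

def inv : F8 → F8
  | e0 => e0
  | e1 => e1
  | e2 => e5
  | e3 => e6
  | e4 => e7
  | e5 => e2
  | e6 => e3
  | e7 => e4

instance : Zero F8 := ⟨e0⟩
instance : One F8 := ⟨e1⟩
instance : Add F8 := ⟨add⟩
instance : Mul F8 := ⟨mul⟩
instance : Neg F8 := ⟨id⟩
instance : Inv F8 := ⟨inv⟩

instance : CommRing F8 where
  nsmul := nsmulRec
  zsmul := zsmulRec
  add_assoc := by decide
  zero_add := by decide
  add_zero := by decide
  add_comm := by decide
  neg_add_cancel := by decide
  mul_assoc := by decide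
  one_mul := by decide
  mul_one := by decide
  left_distrib := by decide
  right_distrib := by decide
  mul_comm := by decide
  zero_mul := by decide
  mul_zero := by decide

instance : Field F8 where
  exists_pair_ne := ⟨e0, e1, by decide⟩
  mul_inv_cancel := by decide
  inv_zero := by decide
  nnqsmul := _
  qsmul := _

theorem cardF8 : Fintype.card F8 = 8 := by decide

end F8

section exprs
variable {K : Type*} [CommRing K]

/-- The affine evaluation of the curve polynomial. -/
def fEXPR (x y z : K) : K :=
  x^6 + x^5*y + x*y^5 + y^6 + (x^5 + x^2*y^3 + y^5)*z + x^3*y*z^2 + x*y^2*z^3 + (x+y)*z^5 + z^6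

/-- The affine evaluations of the three partial derivatives (in characteristic 2). -/
def dEXPR : Fin 3 → K → K → K → K
  | 0 => fun x y z => x^4*y + y^5 + x^4*z + x^2*y*z^2 + y^2*z^3 + z^5
  | 1 => fun x y z => x^5 + x*y^4 + x^2*y^2*z + y^4*z + x^3*z^2 + z^5
  | 2 => fun x y z => x^5 + x^2*y^3 + y^5 + x*y^2*z^2 + (x+y)*z^4

/-- The smooth-point condition, expressed on vectors. -/
def COND (v : Fin 3 → K) : Prop :=
  fEXPR (v 0) (v 1) (v 2) = 0 ∧ ∃ i : Fin 3, dEXPR i (v 0) (v 1) (v 2) ≠ 0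

lemma fEXPR_smul (a x y z : K) : fEXPR (a*x) (a*y) (a*z) = a^6 * fEXPR x y z := by
  simp only [fEXPR]; ring

lemma dEXPR_smul (i : Fin 3) (a x y z : K) :
    dEXPR i (a*x) (a*y) (a*z) = a^5 * dEXPR i x y z := by
  fin_cases i <;> simp only [dEXPR] <;> ring

lemma fEXPR_map {L : Type*} [CommRing L] (g : K →+* L) (x y z : K) :
    fEXPR (g x) (g y) (g z) = g (fEXPR x y z) := by
  simp only [fEXPR, map_add, map_mul, map_pow]

lemma dEXPR_map {L : Type*} [CommRing L] (g : K →+* L) (i : Fin 3) (x y z : K) :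
    dEXPR i (g x) (g y) (g z) = g (dEXPR i x y z) := by
  fin_cases i <;> simp only [dEXPR, map_add, map_mul, map_pow]

end exprs

instance : DecidablePred (COND (K := F8)) := fun v => by
  unfold COND; infer_instance

set_option maxHeartbeats 4000000 in
set_option maxRecDepth 10000 in
theorem cardF8vec : Fintype.card {v : Fin 3 → F8 // v ≠ 0 ∧ COND v} = 168 := by
  decide

section smulCount
variable {K : Type*} [Field K]

lemma COND_smul (a : Kˣ) (v : Fin 3 → K) : COND ((a : K) • v) ↔ COND v := by
  have hx : ∀ i, ((a : K) • v) i = (a : K) * v i := fun i => rfl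
  have ha : (a : K) ≠ 0 := a.ne_zero
  constructor <;> rintro ⟨h1, i, h2⟩
  · refine ⟨?_, i, fun hc => h2 ?_⟩
    · rw [hx, hx, hx, fEXPR_smul] at h1
      rcases mul_eq_zero.1 h1 with h | h
      · exact absurd h (pow_ne_zero _ ha)
      · exact h
    · rw [hx, hx, hx, dEXPR_smul, hc, mul_zero]
  · refine ⟨?_, i, fun hc => h2 ?_⟩
    · rw [hx, hx, hx, fEXPR_smul, h1, mul_zero]
    · rw [hx, hx, hx, dEXPR_smul] at hc
      rcases mul_eq_zero.1 hc with h | h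
      · exact absurd h (pow_ne_zero _ ha)
      · exact h

/-- nonzero vectors satisfying `COND` biject with (points satisfying the condition) × units. -/
noncomputable def smulEquiv :
    ({P : Projectivization K (Fin 3 → K) // COND P.rep} × Kˣ) ≃
      {v : Fin 3 → K // v ≠ 0 ∧ COND v} := by
  apply Equiv.ofBijective
    (fun x => ⟨(x.2 : K) • x.1.1.rep,
      smul_ne_zero x.2.ne_zero x.1.1.rep_nonzero, (COND_smul x.2 x.1.1.rep).2 x.1.2⟩)
  constructor
  · rintro ⟨⟨P, hP⟩, a⟩ ⟨⟨Q, hQ⟩, b⟩ h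
    have hvec : (a : K) • P.rep = (b : K) • Q.rep := congrArg Subtype.val h
    have hPQ : P = Q := by
      have h1 : Projectivization.mk K ((a : K) • P.rep)
          (smul_ne_zero a.ne_zero P.rep_nonzero) = P := by
        refine ((Projectivization.mk_eq_mk_iff K _ _ _ P.rep_nonzero).2
          ⟨a, (Units.smul_def a P.rep).symm⟩).trans (Projectivization.mk_rep P)
      have h2 : Projectivization.mk K ((b : K) • Q.rep)
          (smul_ne_zero b.ne_zero Q.rep_nonzero) = Q := by
        refine ((Projectivization.mk_eq_mk_iff K _ _ _ Q.rep_nonzero).2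
          ⟨b, (Units.smul_def b Q.rep).symm⟩).trans (Projectivization.mk_rep Q)
      rw [← h1, ← h2]
      congr 1
    subst hPQ
    obtain ⟨i, hi⟩ := Function.ne_iff.1 P.rep_nonzero
    have hi' : P.rep i ≠ 0 := by simpa using hi
    have hfun : (a : K) * P.rep i = (b : K) * P.rep i := congrFun hvec i
    have hab : (a : K) = (b : K) := mul_right_cancel₀ hi' hfun
    simp only [Prod.mk.injEq, Subtype.mk.injEq]
    exact ⟨trivial, Units.ext hab⟩
  · rintro ⟨v, hv, hC⟩
    obtain ⟨b, hb⟩ := Projectivization.exists_smul_eq_mk_rep K v hv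
    refine ⟨⟨⟨Projectivization.mk K v hv, by rw [← hb]; exact (COND_smul b v).2 hC⟩, b⁻¹⟩, ?_⟩
    apply Subtype.ext
    rw [Units.smul_def] at hb
    show (↑b⁻¹ : K) • (Projectivization.mk K v hv).rep = v
    rw [← hb, smul_smul, ← Units.val_mul, inv_mul_cancel, Units.val_one, one_smul]

end smulCount

abbrev GF8 := GaloisField 2 3

lemma htwo : (2 : GF8) = 0 := by
  have := CharP.cast_eq_zero GF8 2
  exact_mod_cast this

lemma eval_curve (v : Fin 3 → GF8) :
    eval v curveDeg6F8 = fEXPR (v 0) (v 1) (v 2) := by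
  simp [curveDeg6F8, fEXPR]

lemma eval_pderiv (i : Fin 3) (v : Fin 3 → GF8) :
    eval v (pderiv i curveDeg6F8) = dEXPR i (v 0) (v 1) (v 2) := by
  fin_cases i
  · simp only [dEXPR]
    simp [curveDeg6F8, pderiv_mul, pderiv_pow]
    linear_combination ((v 0)^5*3 + (v 0)^4*(v 1)*2 + (v 0)^4*(v 2)*2
      + (v 0)*(v 1)^3*(v 2) + (v 0)^2*(v 1)*(v 2)^2) * htwo
  · simp only [dEXPR]
    simp [curveDeg6F8, pderiv_mul, pderiv_pow]
    linear_combination ((v 0)*(v 1)^4*2 + (v 1)^5*3 + (v 0)^2*(v 1)^2*(v 2)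
      + (v 1)^4*(v 2)*2 + (v 0)*(v 1)*(v 2)^3) * htwo
  · simp only [dEXPR]
    simp [curveDeg6F8, pderiv_mul, pderiv_pow]
    linear_combination ((v 0)^3*(v 1)*(v 2) + (v 0)*(v 1)^2*(v 2)^2
      + ((v 0)+(v 1))*(v 2)^4*2 + (v 2)^5*3) * htwo

noncomputable instance : Fintype GF8 := Fintype.ofFinite _

lemma cardGF8 : Fintype.card GF8 = 8 := by
  have h := GaloisField.card 2 3 (by norm_num)
  rwa [Nat.card_eq_fintype_card] at h

/-- transfer the count from `F8` to `GF8`. -/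
lemma cardGF8vec : Nat.card {v : Fin 3 → GF8 // v ≠ 0 ∧ COND v} = 168 := by
  obtain φ := FiniteField.ringEquivOfCardEq (K := F8) (K' := GF8)
    (by rw [F8.cardF8, cardGF8])
  have key : ∀ v : Fin 3 → F8,
      ((fun i => φ (v i)) ≠ 0 ∧ COND (fun i => φ (v i))) ↔ (v ≠ 0 ∧ COND v) := by
    intro v
    have hz : (fun i => φ (v i)) = 0 ↔ v = 0 := by
      constructor
      · intro h; funext i
        have := congrFun h i
        exact (map_eq_zero_iff φ φ.injective).1 this
      · intro h; subst h; funext i; simp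
    have e1 : fEXPR (φ (v 0)) (φ (v 1)) (φ (v 2)) = φ (fEXPR (v 0) (v 1) (v 2)) := by
      simpa using fEXPR_map (φ : F8 →+* GF8) (v 0) (v 1) (v 2)
    have e2 : ∀ i : Fin 3, dEXPR i (φ (v 0)) (φ (v 1)) (φ (v 2))
        = φ (dEXPR i (v 0) (v 1) (v 2)) := by
      intro i
      simpa using dEXPR_map (φ : F8 →+* GF8) i (v 0) (v 1) (v 2)
    have hC : COND (fun i => φ (v i)) ↔ COND v := by
      show (fEXPR (φ (v 0)) (φ (v 1)) (φ (v 2)) = 0 ∧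
          ∃ i : Fin 3, dEXPR i (φ (v 0)) (φ (v 1)) (φ (v 2)) ≠ 0) ↔ _
      rw [e1, map_eq_zero_iff φ φ.injective]
      apply and_congr Iff.rfl
      apply exists_congr; intro i
      rw [e2 i, ne_eq, map_eq_zero_iff φ φ.injective]
    exact and_congr (not_congr hz) hC
  have e : {v : Fin 3 → F8 // v ≠ 0 ∧ COND v} ≃ {v : Fin 3 → GF8 // v ≠ 0 ∧ COND v} :=
    (Equiv.subtypeEquiv (Equiv.piCongrRight fun _ => φ.toEquiv)
      (by intro v; exact (key v).symm))
  rw [← Nat.card_congr e, Nat.card_eq_fintype_card, cardF8vec]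

/-- The curve has exactly `24` smooth `F₈`-rational points. -/
theorem stmt_8 :
    Nat.card {P : Projectivization (GaloisField 2 3) (Fin 3 → GaloisField 2 3) //
      eval P.rep curveDeg6F8 = 0 ∧
      ∃ i, eval P.rep (pderiv i curveDeg6F8) ≠ 0} = 24 := by
  have hiff : ∀ P : Projectivization GF8 (Fin 3 → GF8),
      (eval P.rep curveDeg6F8 = 0 ∧ ∃ i, eval P.rep (pderiv i curveDeg6F8) ≠ 0) ↔
        COND P.rep := by
    intro P
    unfold COND
    rw [eval_curve]
    apply and_congr Iff.rfl
    apply exists_congr; intro i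
    rw [eval_pderiv]
  rw [Nat.card_congr (Equiv.subtypeEquivRight hiff)]
  have h1 : Nat.card ({P : Projectivization GF8 (Fin 3 → GF8) // COND P.rep} × GF8ˣ) = 168 := by
    rw [Nat.card_congr (smulEquiv (K := GF8)), cardGF8vec]
  rw [Nat.card_prod] at h1
  have h2 : Nat.card GF8ˣ = 7 := by
    rw [Nat.card_units, Nat.card_eq_fintype_card, cardGF8]
  rw [h2] at h1
  omega
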